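/- For every s > 0, every function f ∈ L²([0,1]^d) belonging to the Besov space B^s_{2∞} also belongs to B^{ds/(2s+d)}_{2∞} ∩ W_G(2d/(2s+d)). -/

import Mathlib

open MeasureTheory ProbabilityTheory Real Set
open scoped ENNReal NNReal

noncomputable section

attribute [local instance] Classical.propDecidable

namespace CopulaEstimation

/-- The unit cube `[0,1]^d`. -/
def box (d : ℕ) : Set (Fin d → ℝ) := Set.univ.pi fun _ => Set.Icc (0 : ℝ) 1

/-- Rescaled and translated univariate function `h_{j,k}(x) = 2^{j/2} h(2^j x - k)`. -/
def wsc (h : ℝ → ℝ) (j : ℕ) (k : ℤ) (x : ℝ) : ℝ :=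
  (2 : ℝ) ^ ((j : ℝ) / 2) * h ((2 : ℝ) ^ (j : ℕ) * x - (k : ℝ))

/-- The index set `S_d = {0,1}^d \ {(0,…,0)}`. -/
def Sd (d : ℕ) : Type := {ε : Fin d → Bool // ε ≠ fun _ => false}

instance (d : ℕ) : Fintype (Sd d) := by unfold Sd; infer_instance

/-- Tensorized scaling function `φ_{j,k}`. -/
def tensS (φ : ℝ → ℝ) {d : ℕ} (j : ℕ) (k : Fin d → ℤ) (x : Fin d → ℝ) : ℝ :=
  ∏ m, wsc φ j (k m) (x m)

/-- Tensorized wavelet `ψ^ε_{j,k}`. -/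
def tensW (φ ψ : ℝ → ℝ) {d : ℕ} (j : ℕ) (ε : Fin d → Bool) (k : Fin d → ℤ)
    (x : Fin d → ℝ) : ℝ :=
  ∏ m, if ε m then wsc ψ j (k m) (x m) else wsc φ j (k m) (x m)

/-- Scaling coefficient `f_{j,k}` of a function supported on the unit cube. -/
def coefS (φ : ℝ → ℝ) {d : ℕ} (f : (Fin d → ℝ) → ℝ) (j : ℕ) (k : Fin d → ℤ) : ℝ :=
  ∫ x in box d, f x * tensS φ j k x

/-- Wavelet coefficient `f^ε_{j,k}` of a function supported on the unit cube. -/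
def coefW (φ ψ : ℝ → ℝ) {d : ℕ} (f : (Fin d → ℝ) → ℝ) (j : ℕ) (k : Fin d → ℤ)
    (ε : Fin d → Bool) : ℝ :=
  ∫ x in box d, f x * tensW φ ψ j ε k x

/-- The hypotheses on the pair `(φ, ψ)`: continuously differentiable, supported on `[0, L]`,
and generating, at every coarse level `j₀`, an orthonormal basis of `L²(ℝ^d)`
(orthonormality together with the Parseval identity). -/
def IsWaveletBasis (d : ℕ) (L : ℝ) (φ ψ : ℝ → ℝ) : Prop :=
  ContDiff ℝ 1 φ ∧ ContDiff ℝ 1 ψ ∧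
  (∀ x, x ∉ Set.Icc (0 : ℝ) L → φ x = 0) ∧
  (∀ x, x ∉ Set.Icc (0 : ℝ) L → ψ x = 0) ∧
  (∀ (j j' : ℕ) (k k' : Fin d → ℤ) (ε ε' : Sd d),
    ∫ x : Fin d → ℝ, tensW φ ψ j ε.1 k x * tensW φ ψ j' ε'.1 k' x
      = if j = j' ∧ k = k' ∧ ε = ε' then 1 else 0) ∧
  (∀ (j : ℕ) (k k' : Fin d → ℤ),
    ∫ x : Fin d → ℝ, tensS φ j k x * tensS φ j k' x = if k = k' then 1 else 0) ∧
  (∀ (j₀ j : ℕ), j₀ ≤ j → ∀ (k k' : Fin d → ℤ) (ε : Sd d),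
    ∫ x : Fin d → ℝ, tensS φ j₀ k x * tensW φ ψ j ε.1 k' x = 0) ∧
  (∀ (j₀ : ℕ) (f : (Fin d → ℝ) → ℝ), MemLp f 2 volume →
    ∫ x, (f x) ^ 2
      = (∑' k : Fin d → ℤ, (∫ x, f x * tensS φ j₀ k x) ^ 2)
        + ∑' (j : {j : ℕ // j₀ ≤ j}) (k : Fin d → ℤ) (ε : Sd d),
            (∫ x, f x * tensW φ ψ j.1 ε.1 k x) ^ 2)

/-- Membership in the Besov space `B^s_{2∞}` of `L²([0,1]^d)`, in terms of wavelet
coefficients. -/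
def MemBesov (φ ψ : ℝ → ℝ) {d : ℕ} (s : ℝ) (f : (Fin d → ℝ) → ℝ) : Prop :=
  (⨆ J : ℕ, ENNReal.ofReal ((2 : ℝ) ^ (2 * (J : ℝ) * s)) *
      ∑' (j : {j : ℕ // J < j}) (k : Fin d → ℤ) (ε : Sd d),
        ENNReal.ofReal ((coefW φ ψ f j.1 k ε.1) ^ 2)) < ⊤

/-- Membership in the local weak Besov space `W_L(r)`. -/
def MemWeakL (φ ψ : ℝ → ℝ) {d : ℕ} (r : ℝ) (f : (Fin d → ℝ) → ℝ) : Prop :=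
  (⨆ lam ∈ Set.Ioc (0 : ℝ) 1, ENNReal.ofReal (lam ^ (r - 2)) *
      ∑' (j : ℕ) (k : Fin d → ℤ) (ε : Sd d),
        (if |coefW φ ψ f j k ε.1| ≤ lam
          then ENNReal.ofReal ((coefW φ ψ f j k ε.1) ^ 2) else 0)) < ⊤

/-- Membership in the global weak Besov space `W_G(r)`. -/
def MemWeakG (φ ψ : ℝ → ℝ) {d : ℕ} (r : ℝ) (f : (Fin d → ℝ) → ℝ) : Prop :=
  (⨆ lam ∈ Set.Ioc (0 : ℝ) 1, ENNReal.ofReal (lam ^ (r - 2)) *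
      ∑' (j : ℕ) (k : Fin d → ℤ) (ε : Sd d),
        (if (∑' k' : Fin d → ℤ, (coefW φ ψ f j k' ε.1) ^ 2) ≤ (2 : ℝ) ^ (d * j) * lam ^ 2
          then ENNReal.ofReal ((coefW φ ψ f j k ε.1) ^ 2) else 0)) < ⊤

/-- Essential boundedness of `f` on `[0,1]^d`. -/
def MemLinf {d : ℕ} (f : (Fin d → ℝ) → ℝ) : Prop :=
  ∃ M : ℝ, ∀ᵐ x ∂(volume.restrict (box d)), |f x| ≤ M

/-! ### Auxiliary lemmas -/

lemma box_measurableSet (d : ℕ) : MeasurableSet (box d) :=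
  MeasurableSet.univ_pi fun _ => measurableSet_Icc

lemma coefW_eq_zero_of_out {d : ℕ} {L : ℝ} (hL : 0 ≤ L) {φ ψ : ℝ → ℝ}
    (hφ : ∀ x, x ∉ Set.Icc (0 : ℝ) L → φ x = 0)
    (hψ : ∀ x, x ∉ Set.Icc (0 : ℝ) L → ψ x = 0)
    (f : (Fin d → ℝ) → ℝ) (j : ℕ) (k : Fin d → ℤ) (ε : Fin d → Bool)
    (m : Fin d) (hk : k m < -⌈L⌉ ∨ (2 : ℤ) ^ j < k m) :
    coefW φ ψ f j k ε = 0 := by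
  have hzero : Set.EqOn (fun x => f x * tensW φ ψ j ε k x) (fun _ => (0 : ℝ)) (box d) := by
    intro x hx
    have hxm : x m ∈ Set.Icc (0 : ℝ) 1 := hx m (Set.mem_univ m)
    obtain ⟨hx0, hx1⟩ := hxm
    have hpow : (0 : ℝ) < (2 : ℝ) ^ (j : ℕ) := by positivity
    have harg : (2 : ℝ) ^ (j : ℕ) * x m - (k m : ℝ) ∉ Set.Icc (0 : ℝ) L := by
      rw [Set.mem_Icc]
      push_neg
      intro ha
      rcases hk with h | h
      · have h1 : ((k m : ℝ)) + 1 ≤ -(⌈L⌉ : ℝ) := by exact_mod_cast Int.add_one_le_of_lt h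
        have h2 : L ≤ (⌈L⌉ : ℝ) := Int.le_ceil L
        have h3 : (0 : ℝ) ≤ (2 : ℝ) ^ (j : ℕ) * x m := mul_nonneg hpow.le hx0
        linarith
      · exfalso
        have h1 : ((2 : ℤ) ^ j : ℝ) + 1 ≤ (k m : ℝ) := by exact_mod_cast Int.add_one_le_of_lt h
        have h2 : ((2 : ℤ) ^ j : ℝ) = (2 : ℝ) ^ (j : ℕ) := by push_cast; ring
        have h3 : (2 : ℝ) ^ (j : ℕ) * x m ≤ (2 : ℝ) ^ (j : ℕ) := by
          nlinarith
        linarith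
    have hfac : (if ε m then wsc ψ j (k m) (x m) else wsc φ j (k m) (x m)) = 0 := by
      unfold wsc
      split_ifs
      · rw [hψ _ harg, mul_zero]
      · rw [hφ _ harg, mul_zero]
    have htens : tensW φ ψ j ε k x = 0 :=
      Finset.prod_eq_zero (Finset.mem_univ m) hfac
    simp only [htens, mul_zero]
  rw [coefW, setIntegral_congr_fun (box_measurableSet d) hzero]
  simp

lemma summable_sq_coefW {d : ℕ} {L : ℝ} (hL : 0 ≤ L) {φ ψ : ℝ → ℝ}
    (hφ : ∀ x, x ∉ Set.Icc (0 : ℝ) L → φ x = 0)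
    (hψ : ∀ x, x ∉ Set.Icc (0 : ℝ) L → ψ x = 0)
    (f : (Fin d → ℝ) → ℝ) (j : ℕ) (ε : Fin d → Bool) :
    Summable fun k : Fin d → ℤ => (coefW φ ψ f j k ε) ^ 2 := by
  apply summable_of_ne_finset_zero
    (s := Fintype.piFinset fun _ : Fin d => Finset.Icc (-⌈L⌉) ((2 : ℤ) ^ j))
  intro k hk
  rw [Fintype.mem_piFinset] at hk
  push_neg at hk
  obtain ⟨m, hm⟩ := hk
  rw [Finset.mem_Icc] at hm
  push_neg at hm
  have hout : k m < -⌈L⌉ ∨ (2 : ℤ) ^ j < k m := by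
    by_cases h : -⌈L⌉ ≤ k m
    · exact Or.inr (hm h)
    · exact Or.inl (lt_of_not_ge h)
  rw [coefW_eq_zero_of_out hL hφ hψ f j k ε m hout]
  ring

lemma geom_sum_le_aux (d : ℕ) (hd : 1 ≤ d) (J : ℕ) :
    ∑ j ∈ Finset.range (J + 1), (2 : ℝ) ^ (d * j) ≤ 2 ^ (d * (J + 1)) := by
  induction J with
  | zero =>
    simpa using one_le_pow₀ (one_le_two (α := ℝ))
  | succ n ih =>
    rw [Finset.sum_range_succ]
    have h2 : (2 : ℝ) ≤ 2 ^ d := by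
      calc (2 : ℝ) = 2 ^ 1 := (pow_one 2).symm
      _ ≤ 2 ^ d := pow_le_pow_right₀ one_le_two hd
    have h3 : (2 : ℝ) ^ (d * (n + 1 + 1)) = 2 ^ d * 2 ^ (d * (n + 1)) := by
      rw [← pow_add]; congr 1; ring
    have h4 : (0 : ℝ) < 2 ^ (d * (n + 1)) := by positivity
    nlinarith [ih]

end CopulaEstimation
open CopulaEstimation in
/-- every function of `B^s_{2∞}` belongs to
`B^{ds/(2s+d)}_{2∞} ∩ W_G(2d/(2s+d))`. -/
theorem besov_subset_besov_inter_weakG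
    (d : ℕ) (hd : 2 ≤ d) (L : ℝ) (hL : 1 ≤ L) (φ ψ : ℝ → ℝ)
    (hwav : IsWaveletBasis d L φ ψ) (s : ℝ) (hs : 0 < s) :
    ∀ f : (Fin d → ℝ) → ℝ, MemLp f 2 (volume.restrict (box d)) →
      MemBesov φ ψ s f →
      MemBesov φ ψ (d * s / (2 * s + d)) f ∧ MemWeakG φ ψ (2 * d / (2 * s + d)) f := by
  intro f hf2 hB
  obtain ⟨-, -, hφ0, hψ0, -⟩ := hwav
  have hL0 : (0 : ℝ) ≤ L := by linarith
  have hd0 : (0 : ℝ) < (d : ℝ) := by exact_mod_cast Nat.pos_of_ne_zero (by omega)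
  have hsd : (0 : ℝ) < 2 * s + (d : ℝ) := by linarith
  have hC : (⨆ J : ℕ, ENNReal.ofReal ((2 : ℝ) ^ (2 * (J : ℝ) * s)) *
      ∑' (j : {j : ℕ // J < j}) (k : Fin d → ℤ) (ε : Sd d),
        ENNReal.ofReal ((coefW φ ψ f j.1 k ε.1) ^ 2)) < ⊤ := hB
  have hCB : ∀ J : ℕ, ENNReal.ofReal ((2 : ℝ) ^ (2 * (J : ℝ) * s)) *
      (∑' (j : {j : ℕ // J < j}) (k : Fin d → ℤ) (ε : Sd d),
        ENNReal.ofReal ((coefW φ ψ f j.1 k ε.1) ^ 2))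
      ≤ ⨆ J : ℕ, ENNReal.ofReal ((2 : ℝ) ^ (2 * (J : ℝ) * s)) *
      ∑' (j : {j : ℕ // J < j}) (k : Fin d → ℤ) (ε : Sd d),
        ENNReal.ofReal ((coefW φ ψ f j.1 k ε.1) ^ 2) :=
    fun J => le_iSup (fun n : ℕ => ENNReal.ofReal ((2 : ℝ) ^ (2 * (n : ℝ) * s)) *
      ∑' (j : {j : ℕ // n < j}) (k : Fin d → ℤ) (ε : Sd d),
        ENNReal.ofReal ((coefW φ ψ f j.1 k ε.1) ^ 2)) J
  constructor
  · -- Besov part: exponent monotonicity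
    show (⨆ J : ℕ, _) < ⊤
    refine lt_of_le_of_lt (iSup_mono fun J => ?_) hC
    refine mul_le_mul_left (ENNReal.ofReal_le_ofReal ?_) _
    apply Real.rpow_le_rpow_of_exponent_le one_le_two
    have h1 : (d : ℝ) * s / (2 * s + d) ≤ s := by
      rw [div_le_iff₀ hsd]; nlinarith
    have hJ : (0 : ℝ) ≤ 2 * (J : ℝ) := by positivity
    nlinarith
  · -- Weak Besov part
    show (⨆ lam ∈ Set.Ioc (0 : ℝ) 1, _) < ⊤
    refine lt_of_le_of_lt
      (b := (Fintype.card (Sd d) : ℝ≥0∞) * ENNReal.ofReal ((4 : ℝ) ^ d)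
        + ⨆ J : ℕ, ENNReal.ofReal ((2 : ℝ) ^ (2 * (J : ℝ) * s)) *
            ∑' (j : {j : ℕ // J < j}) (k : Fin d → ℤ) (ε : Sd d),
              ENNReal.ofReal ((coefW φ ψ f j.1 k ε.1) ^ 2))
      (iSup₂_le fun lam hlam => ?_)
      (ENNReal.add_lt_top.mpr
        ⟨ENNReal.mul_lt_top (ENNReal.natCast_lt_top _) ENNReal.ofReal_lt_top, hC⟩)
    obtain ⟨hlam0, hlam1⟩ := hlam
    set t : ℝ := 2 / (2 * s + (d : ℝ)) with htdef
    have ht0 : 0 < t := by positivity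
    set J : ℕ := ⌈Real.logb 2 (lam ^ (-t))⌉₊ with hJdef
    have hlamt0 : 0 < lam ^ (-t) := Real.rpow_pos_of_pos hlam0 _
    have hlamt1 : 1 ≤ lam ^ (-t) := by
      have := Real.rpow_le_rpow_of_exponent_ge hlam0 hlam1 (by linarith : -t ≤ 0)
      rwa [Real.rpow_zero] at this
    have hlogb0 : 0 ≤ Real.logb 2 (lam ^ (-t)) := Real.logb_nonneg one_lt_two hlamt1
    have hA : lam ^ (-t) ≤ (2 : ℝ) ^ J := by
      calc lam ^ (-t) = (2 : ℝ) ^ Real.logb 2 (lam ^ (-t)) :=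
            (Real.rpow_logb two_pos (by norm_num) hlamt0).symm
        _ ≤ (2 : ℝ) ^ ((J : ℕ) : ℝ) :=
            Real.rpow_le_rpow_of_exponent_le one_le_two (Nat.le_ceil _)
        _ = (2 : ℝ) ^ J := Real.rpow_natCast 2 J
    have hBJ : (2 : ℝ) ^ J ≤ 2 * lam ^ (-t) := by
      calc (2 : ℝ) ^ J = (2 : ℝ) ^ ((J : ℕ) : ℝ) := (Real.rpow_natCast 2 J).symm
        _ ≤ (2 : ℝ) ^ (Real.logb 2 (lam ^ (-t)) + 1) :=
            Real.rpow_le_rpow_of_exponent_le one_le_two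
              (le_of_lt (Nat.ceil_lt_add_one hlogb0))
        _ = 2 * lam ^ (-t) := by
            rw [Real.rpow_add two_pos, Real.rpow_logb two_pos (by norm_num) hlamt0,
              Real.rpow_one]
            ring
    -- Per-level bound for small levels
    have claim1 : ∀ j : ℕ,
        (∑' (k : Fin d → ℤ) (ε : Sd d),
          (if (∑' k' : Fin d → ℤ, (coefW φ ψ f j k' ε.1) ^ 2)
                ≤ (2 : ℝ) ^ (d * j) * lam ^ 2
            then ENNReal.ofReal ((coefW φ ψ f j k ε.1) ^ 2) else 0))
        ≤ (Fintype.card (Sd d) : ℝ≥0∞) *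
            ENNReal.ofReal ((2 : ℝ) ^ (d * j) * lam ^ 2) := by
      intro j
      rw [ENNReal.tsum_comm]
      refine le_trans (ENNReal.tsum_le_tsum fun ε => ?_)
        (le_of_eq (by rw [tsum_fintype, Finset.sum_const, Finset.card_univ, nsmul_eq_mul]))
      by_cases h : (∑' k' : Fin d → ℤ, (coefW φ ψ f j k' ε.1) ^ 2)
          ≤ (2 : ℝ) ^ (d * j) * lam ^ 2
      · simp only [if_pos h]
        rw [← ENNReal.ofReal_tsum_of_nonneg (fun k => sq_nonneg _)
          (summable_sq_coefW hL0 hφ0 hψ0 f j ε.1)]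
        exact ENNReal.ofReal_le_ofReal h
      · simp only [if_neg h, tsum_zero]
        positivity
    have claim2 : ∀ j : ℕ,
        (∑' (k : Fin d → ℤ) (ε : Sd d),
          (if (∑' k' : Fin d → ℤ, (coefW φ ψ f j k' ε.1) ^ 2)
                ≤ (2 : ℝ) ^ (d * j) * lam ^ 2
            then ENNReal.ofReal ((coefW φ ψ f j k ε.1) ^ 2) else 0))
        ≤ ∑' (k : Fin d → ℤ) (ε : Sd d), ENNReal.ofReal ((coefW φ ψ f j k ε.1) ^ 2) :=
      fun j => ENNReal.tsum_le_tsum fun k => ENNReal.tsum_le_tsum fun ε => by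
        split_ifs <;> simp
    -- split the sum over j
    have hsplit : (∑' (j : ℕ) (k : Fin d → ℤ) (ε : Sd d),
          (if (∑' k' : Fin d → ℤ, (coefW φ ψ f j k' ε.1) ^ 2)
                ≤ (2 : ℝ) ^ (d * j) * lam ^ 2
            then ENNReal.ofReal ((coefW φ ψ f j k ε.1) ^ 2) else 0))
        ≤ (∑' j : ℕ, if j ≤ J then (Fintype.card (Sd d) : ℝ≥0∞) *
              ENNReal.ofReal ((2 : ℝ) ^ (d * j) * lam ^ 2) else 0)
          + ∑' j : ℕ, (if J < j then
              ∑' (k : Fin d → ℤ) (ε : Sd d),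
                ENNReal.ofReal ((coefW φ ψ f j k ε.1) ^ 2) else 0) := by
      rw [← ENNReal.tsum_add]
      refine ENNReal.tsum_le_tsum fun j => ?_
      by_cases h : j ≤ J
      · simp only [if_pos h, if_neg (not_lt.mpr h), add_zero]
        exact claim1 j
      · simp only [if_neg h, if_pos (not_le.mp h), zero_add]
        exact claim2 j
    have hsmall : (∑' j : ℕ, if j ≤ J then (Fintype.card (Sd d) : ℝ≥0∞) *
            ENNReal.ofReal ((2 : ℝ) ^ (d * j) * lam ^ 2) else 0)
        ≤ (Fintype.card (Sd d) : ℝ≥0∞) *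
            ENNReal.ofReal ((2 : ℝ) ^ (d * (J + 1)) * lam ^ 2) := by
      rw [tsum_eq_sum (s := Finset.range (J + 1))
        (fun j hj => if_neg (by simpa [Nat.lt_succ_iff] using hj))]
      rw [Finset.sum_congr rfl (fun j hj => if_pos
        (by simpa [Nat.lt_succ_iff] using Finset.mem_range.mp hj))]
      rw [← Finset.mul_sum]
      refine mul_le_mul_right ?_ _
      calc ∑ j ∈ Finset.range (J + 1), ENNReal.ofReal ((2 : ℝ) ^ (d * j) * lam ^ 2)
          = ENNReal.ofReal (∑ j ∈ Finset.range (J + 1), (2 : ℝ) ^ (d * j) * lam ^ 2) :=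
            (ENNReal.ofReal_sum_of_nonneg (fun j _ => by positivity)).symm
        _ ≤ ENNReal.ofReal ((2 : ℝ) ^ (d * (J + 1)) * lam ^ 2) := by
            refine ENNReal.ofReal_le_ofReal ?_
            rw [← Finset.sum_mul]
            exact mul_le_mul_of_nonneg_right (geom_sum_le_aux d (by omega) J)
              (by positivity)
    have htail : (∑' j : ℕ, (if J < j then
            ∑' (k : Fin d → ℤ) (ε : Sd d),
              ENNReal.ofReal ((coefW φ ψ f j k ε.1) ^ 2) else 0))
        = ∑' (j : {j : ℕ // J < j}) (k : Fin d → ℤ) (ε : Sd d),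
            ENNReal.ofReal ((coefW φ ψ f j.1 k ε.1) ^ 2) := by
      refine ((tsum_subtype {j : ℕ | J < j} fun j =>
        ∑' (k : Fin d → ℤ) (ε : Sd d),
          ENNReal.ofReal ((coefW φ ψ f j k ε.1) ^ 2)).trans ?_).symm
      refine tsum_congr fun j => ?_
      by_cases h : J < j <;> simp [Set.indicator_apply, h]
    -- real estimates
    have e4 : 2 * (d : ℝ) / (2 * s + (d : ℝ)) - 2 = (-t) * (2 * s) := by
      rw [htdef]; field_simp; ring
    have hreal2 : lam ^ (2 * (d : ℝ) / (2 * s + (d : ℝ)) - 2)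
        ≤ (2 : ℝ) ^ (2 * (J : ℝ) * s) := by
      rw [e4]
      calc lam ^ ((-t) * (2 * s)) = (lam ^ (-t)) ^ (2 * s) :=
            Real.rpow_mul hlam0.le _ _
        _ ≤ ((2 : ℝ) ^ J : ℝ) ^ (2 * s) :=
            Real.rpow_le_rpow hlamt0.le hA (by positivity)
        _ = (2 : ℝ) ^ (2 * (J : ℝ) * s) := by
            rw [← Real.rpow_natCast 2 J, ← Real.rpow_mul (by norm_num : (0:ℝ) ≤ 2)]
            congr 1; ring
    have hpow1 : (2 : ℝ) ^ (d * (J + 1)) ≤ 4 ^ d * lam ^ (-(t * (d : ℝ))) := by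
      have e1 : (2 : ℝ) ^ (d * (J + 1)) = ((2 : ℝ) ^ (J + 1)) ^ d := by
        rw [← pow_mul]; congr 1; ring
      have e2 : (2 : ℝ) ^ (J + 1) ≤ 4 * lam ^ (-t) := by
        rw [pow_succ]; linarith
      calc (2 : ℝ) ^ (d * (J + 1)) = ((2 : ℝ) ^ (J + 1)) ^ d := e1
        _ ≤ (4 * lam ^ (-t)) ^ d := pow_le_pow_left₀ (by positivity) e2 d
        _ = 4 ^ d * (lam ^ (-t)) ^ d := mul_pow _ _ d
        _ = 4 ^ d * lam ^ (-(t * (d : ℝ))) := by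
            rw [← Real.rpow_natCast (lam ^ (-t)) d, ← Real.rpow_mul hlam0.le, neg_mul]
    have e3 : lam ^ (2 * (d : ℝ) / (2 * s + (d : ℝ)) - 2) * lam ^ (2 : ℕ) *
        lam ^ (-(t * (d : ℝ))) = 1 := by
      rw [← Real.rpow_natCast lam 2, ← Real.rpow_add hlam0, ← Real.rpow_add hlam0]
      have hexp : 2 * (d : ℝ) / (2 * s + (d : ℝ)) - 2 + ((2 : ℕ) : ℝ) +
          (-(t * (d : ℝ))) = 0 := by
        rw [htdef]; push_cast; field_simp; ring
      rw [hexp, Real.rpow_zero]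
    have hreal1 : lam ^ (2 * (d : ℝ) / (2 * s + (d : ℝ)) - 2) *
        ((2 : ℝ) ^ (d * (J + 1)) * lam ^ 2) ≤ 4 ^ d := by
      have h0 : (0 : ℝ) ≤ lam ^ (2 * (d : ℝ) / (2 * s + (d : ℝ)) - 2) :=
        (Real.rpow_pos_of_pos hlam0 _).le
      calc lam ^ (2 * (d : ℝ) / (2 * s + (d : ℝ)) - 2) *
            ((2 : ℝ) ^ (d * (J + 1)) * lam ^ 2)
          ≤ lam ^ (2 * (d : ℝ) / (2 * s + (d : ℝ)) - 2) *
            ((4 ^ d * lam ^ (-(t * (d : ℝ)))) * lam ^ 2) := by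
            refine mul_le_mul_of_nonneg_left
              (mul_le_mul_of_nonneg_right hpow1 (by positivity)) h0
        _ = (lam ^ (2 * (d : ℝ) / (2 * s + (d : ℝ)) - 2) * lam ^ (2 : ℕ) *
            lam ^ (-(t * (d : ℝ)))) * 4 ^ d := by ring
        _ = 4 ^ d := by rw [e3, one_mul]
    -- assemble
    calc ENNReal.ofReal (lam ^ (2 * (d : ℝ) / (2 * s + (d : ℝ)) - 2)) *
          ∑' (j : ℕ) (k : Fin d → ℤ) (ε : Sd d),
            (if (∑' k' : Fin d → ℤ, (coefW φ ψ f j k' ε.1) ^ 2)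
                  ≤ (2 : ℝ) ^ (d * j) * lam ^ 2
              then ENNReal.ofReal ((coefW φ ψ f j k ε.1) ^ 2) else 0)
        ≤ ENNReal.ofReal (lam ^ (2 * (d : ℝ) / (2 * s + (d : ℝ)) - 2)) *
          (((Fintype.card (Sd d) : ℝ≥0∞) *
              ENNReal.ofReal ((2 : ℝ) ^ (d * (J + 1)) * lam ^ 2))
            + ∑' (j : {j : ℕ // J < j}) (k : Fin d → ℤ) (ε : Sd d),
                ENNReal.ofReal ((coefW φ ψ f j.1 k ε.1) ^ 2)) := by
          exact mul_le_mul_right (hsplit.trans (add_le_add hsmall (le_of_eq htail))) _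
      _ = (Fintype.card (Sd d) : ℝ≥0∞) *
            (ENNReal.ofReal (lam ^ (2 * (d : ℝ) / (2 * s + (d : ℝ)) - 2)) *
              ENNReal.ofReal ((2 : ℝ) ^ (d * (J + 1)) * lam ^ 2))
          + ENNReal.ofReal (lam ^ (2 * (d : ℝ) / (2 * s + (d : ℝ)) - 2)) *
            ∑' (j : {j : ℕ // J < j}) (k : Fin d → ℤ) (ε : Sd d),
              ENNReal.ofReal ((coefW φ ψ f j.1 k ε.1) ^ 2) := by
          rw [mul_add]; ring_nf
      _ ≤ (Fintype.card (Sd d) : ℝ≥0∞) * ENNReal.ofReal ((4 : ℝ) ^ d)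
          + ⨆ J : ℕ, ENNReal.ofReal ((2 : ℝ) ^ (2 * (J : ℝ) * s)) *
              ∑' (j : {j : ℕ // J < j}) (k : Fin d → ℤ) (ε : Sd d),
                ENNReal.ofReal ((coefW φ ψ f j.1 k ε.1) ^ 2) := by
          refine add_le_add (mul_le_mul_right ?_ _) ?_
          · rw [← ENNReal.ofReal_mul (Real.rpow_pos_of_pos hlam0 _).le]
            exact ENNReal.ofReal_le_ofReal hreal1
          · exact le_trans
              (mul_le_mul_left (ENNReal.ofReal_le_ofReal hreal2) _) (hCB J)
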